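/- Let $\mathcal{F}$ be a sheaf of abelian groups on a fan $\Delta$ with its fan topology, determined by data $(F_\sigma, \varrho^\sigma_\tau)$. Then $\mathcal{F}$ is flabby (every restriction map $\mathcal{F}(\Delta') \to \mathcal{F}(\Lambda)$ for open $\Lambda \subseteq \Delta' \subseteq \Delta$ is surjective) if and only if for every cone $\sigma \in \Delta$ the restriction map $\mathcal{F}(\langle\sigma\rangle) \to \mathcal{F}(\partial\sigma)$ to the boundary fan $\partial\sigma = \langle\sigma\rangle \setminus \{\sigma\}$ is surjective. -/

import Mathlib

open scoped Classical

/-- The sections over a subset `Λ` of the fan `Δ` of the sheaf determined by the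
data `(F_σ, ρ^σ_τ)`: compatible families, extended by zero outside `Λ`. -/
def FanSections {Δ : Type*} [PartialOrder Δ] (F : Δ → Type*) [∀ σ, AddCommGroup (F σ)]
    (ρ : ∀ ⦃σ τ : Δ⦄, τ ≤ σ → (F σ →+ F τ)) (Λ : Set Δ) : Type _ :=
  {f : ∀ σ, F σ //
    (∀ σ, σ ∉ Λ → f σ = 0) ∧ ∀ ⦃σ τ : Δ⦄ (hle : τ ≤ σ), σ ∈ Λ → ρ hle (f σ) = f τ}

/-- Restriction of sections from a larger open (down-closed) set `Λ'` to a smaller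
one `Λ`. -/
noncomputable def FanSections.restrict {Δ : Type*} [PartialOrder Δ] (F : Δ → Type*)
    [∀ σ, AddCommGroup (F σ)] (ρ : ∀ ⦃σ τ : Δ⦄, τ ≤ σ → (F σ →+ F τ))
    {Λ Λ' : Set Δ} (hΛ : IsLowerSet Λ) (hsub : Λ ⊆ Λ') :
    FanSections F ρ Λ' → FanSections F ρ Λ := fun f =>
  ⟨fun σ => if σ ∈ Λ then f.1 σ else 0, by
    constructor
    · intro σ hσ; exact if_neg hσ
    · intro σ τ hle hσ
      simp only [if_pos hσ, if_pos (hΛ hle hσ)]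
      exact f.2.2 hle (hsub hσ)⟩

/-- A sheaf on a fan `Δ` (a finite poset with the fan topology,
open = down-closed) determined by data `(F_σ, ρ^σ_τ)` is flabby — every
restriction map between open sets is surjective — if and only if for every cone
`σ` the restriction map `F(⟨σ⟩) → F(∂σ)` is surjective, where
`⟨σ⟩ = Set.Iic σ` and `∂σ = Set.Iio σ`. -/
theorem flabby_iff_boundary_restrictions_surjective
    {Δ : Type*} [PartialOrder Δ] [Fintype Δ] (F : Δ → Type*) [∀ σ, AddCommGroup (F σ)]
    (ρ : ∀ ⦃σ τ : Δ⦄, τ ≤ σ → (F σ →+ F τ))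
    (hid : ∀ σ : Δ, ρ (le_refl σ) = AddMonoidHom.id (F σ))
    (hcomp : ∀ ⦃σ τ γ : Δ⦄ (h1 : γ ≤ τ) (h2 : τ ≤ σ),
      (ρ h1).comp (ρ h2) = ρ (h1.trans h2)) :
    (∀ (Λ Λ' : Set Δ) (hΛ : IsLowerSet Λ) (_hΛ' : IsLowerSet Λ') (hsub : Λ ⊆ Λ'),
        Function.Surjective (FanSections.restrict F ρ hΛ hsub)) ↔
    (∀ σ : Δ, Function.Surjective
        (FanSections.restrict F ρ (isLowerSet_Iio σ) (Set.Iio_subset_Iic_self))) := by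
  constructor
  · intro h σ
    exact h (Set.Iio σ) (Set.Iic σ) (isLowerSet_Iio σ) (isLowerSet_Iic σ)
      Set.Iio_subset_Iic_self
  · intro hb
    suffices H : ∀ n : ℕ, ∀ (Λ Λ' : Set Δ) (hΛ : IsLowerSet Λ) (hΛ' : IsLowerSet Λ')
        (hsub : Λ ⊆ Λ'), (Λ' \ Λ).ncard = n →
        Function.Surjective (FanSections.restrict F ρ hΛ hsub) by
      intro Λ Λ' hΛ hΛ' hsub
      exact H _ Λ Λ' hΛ hΛ' hsub rfl
    intro n
    induction n with
    | zero =>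
      intro Λ Λ' hΛ hΛ' hsub hcard f
      have hΛeq : Λ = Λ' := by
        have := (Set.ncard_eq_zero (Set.toFinite _)).mp hcard
        apply Set.Subset.antisymm hsub
        intro x hx
        by_contra hxn
        exact absurd (Set.mem_diff_of_mem hx hxn) (by simp [this])
      subst hΛeq
      refine ⟨f, Subtype.ext (funext fun a => ?_)⟩
      by_cases ha : a ∈ Λ
      · simp [FanSections.restrict, ha]
      · simp [FanSections.restrict, ha, f.2.1 a ha]
    | succ n ih =>
      intro Λ Λ' hΛ hΛ' hsub hcard f
      have hne : (Λ' \ Λ).Nonempty := by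
        rw [← Set.ncard_pos (Set.toFinite _)] at *; omega
      obtain ⟨σ, hσ, hmin'⟩ := (Set.toFinite (Λ' \ Λ)).exists_minimal hne
      have hmin : ∀ τ ∈ Λ' \ Λ, τ ≤ σ → σ = τ := fun τ hτ hle => le_antisymm (hmin' hτ hle) hle
      -- all proper faces of σ lie in Λ
      have hIio : Set.Iio σ ⊆ Λ := by
        intro τ hτ
        by_contra hτn
        have hτΛ' : τ ∈ Λ' := hΛ' (le_of_lt hτ) hσ.1
        have := hmin τ ⟨hτΛ', hτn⟩ (le_of_lt hτ)
        exact absurd this.symm (ne_of_lt hτ)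
      -- extend f over σ using the boundary hypothesis
      obtain ⟨h, hh⟩ := hb σ (FanSections.restrict F ρ (isLowerSet_Iio σ) hIio f)
      have hhval : ∀ τ, τ < σ → h.1 τ = f.1 τ := by
        intro τ hτ
        have := congrArg (fun g => g.1 τ) hh
        simpa [FanSections.restrict, hτ, hIio hτ] using this
      set Λ₂ : Set Δ := insert σ Λ with hΛ₂def
      have hΛ₂ : IsLowerSet Λ₂ := by
        intro a b hba ha
        rcases ha with rfl | ha
        · rcases eq_or_lt_of_le hba with rfl | hlt
          · exact Set.mem_insert _ _
          · exact Set.mem_insert_of_mem _ (hIio hlt)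
        · exact Set.mem_insert_of_mem _ (hΛ hba ha)
      have hsub₂ : Λ₂ ⊆ Λ' := by
        intro a ha
        rcases ha with rfl | ha
        · exact hσ.1
        · exact hsub ha
      have hσΛ : σ ∉ Λ := hσ.2
      -- the extended section on Λ₂
      have hf₂ : ∃ f₂ : FanSections F ρ Λ₂, ∀ a ∈ Λ, f₂.1 a = f.1 a := by
        refine ⟨⟨fun a => if a ∈ Λ then f.1 a else h.1 a, ?_, ?_⟩, ?_⟩
        · intro a ha
          show (if a ∈ Λ then f.1 a else h.1 a) = 0
          rw [if_neg (fun hx => ha (Set.mem_insert_of_mem _ hx))]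
          refine h.2.1 a fun hale => ?_
          rcases eq_or_lt_of_le (Set.mem_Iic.mp hale) with rfl | hlt
          · exact ha (Set.mem_insert _ _)
          · exact ha (Set.mem_insert_of_mem _ (hIio hlt))
        · intro a τ hle ha
          show ρ hle (if a ∈ Λ then f.1 a else h.1 a) = (if τ ∈ Λ then f.1 τ else h.1 τ)
          rcases ha with rfl | ha
          · rw [if_neg hσΛ]
            have key := h.2.2 hle (le_refl a)
            by_cases hτ : τ ∈ Λ
            · have hlt : τ < a := lt_of_le_of_ne hle (fun hx => hσΛ (hx ▸ hτ))
              rw [key, hhval τ hlt, if_pos hτ]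
            · rw [key, if_neg hτ]
          · have hτ : τ ∈ Λ := hΛ hle ha
            rw [if_pos ha, if_pos hτ]
            exact f.2.2 hle ha
        · intro a ha; exact if_pos ha
      obtain ⟨f₂, hf₂Λ⟩ := hf₂
      have hcard₂ : (Λ' \ Λ₂).ncard = n := by
        have : Λ' \ Λ₂ = (Λ' \ Λ) \ {σ} := by
          ext a
          simp only [hΛ₂def, Set.mem_diff, Set.mem_insert_iff, Set.mem_singleton_iff]
          tauto
        rw [this, Set.ncard_diff_singleton_of_mem hσ, hcard]
        omega
      obtain ⟨g, hg⟩ := ih Λ₂ Λ' hΛ₂ hΛ' hsub₂ hcard₂ f₂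
      refine ⟨g, Subtype.ext (funext fun a => ?_)⟩
      have hgval : ∀ a ∈ Λ₂, g.1 a = f₂.1 a := by
        intro a ha
        have := congrArg (fun x => x.1 a) hg
        simpa [FanSections.restrict, ha] using this
      by_cases ha : a ∈ Λ
      · show (if a ∈ Λ then g.1 a else 0) = f.1 a
        rw [if_pos ha, hgval a (Set.mem_insert_of_mem _ ha), hf₂Λ a ha]
      · show (if a ∈ Λ then g.1 a else 0) = f.1 a
        rw [if_neg ha, f.2.1 a ha]
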